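/- arXiv:2503.22630 — 4 statements merged into one kernel-verified Lean document; each statement's English description precedes it below -/
import Mathlib

section
/- For every h ∈ [0,1], there exists a subset E of [0,1] with Hausdorff dimension h such that E + E has positive Lebesgue measure if and only if h ∈ [1/2, 1]. -/
open MeasureTheory Set Filter Function Pointwise
open scoped ENNReal NNReal Topology


open MeasureTheory Set Filter

noncomputable def csum (r : ℝ) (a : ℕ → Bool) : ℝ := ∑' n, (if a n then r ^ (n+1) else 0)

section basic
variable {r : ℝ} (hr0 : 0 ≤ r) (hr1 : r < 1)

include hr0 in
lemma csum_term_abs_le (a : ℕ → Bool) (n : ℕ) :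
    |if a n then r ^ (n+1) else 0| ≤ r ^ (n+1) := by
  split <;> simp [abs_of_nonneg, pow_nonneg hr0]

include hr0 in
lemma csum_term_bounds (a : ℕ → Bool) (n : ℕ) :
    0 ≤ (if a n then r ^ (n+1) else 0) ∧ (if a n then r ^ (n+1) else 0) ≤ r ^ (n+1) := by
  constructor <;> (split <;> simp [pow_nonneg hr0])

include hr0 hr1 in
lemma summable_pow_succ : Summable (fun n : ℕ => r ^ (n+1)) := by
  simpa [pow_succ, mul_comm] using (summable_geometric_of_lt_one hr0 hr1).mul_left r

include hr0 hr1 in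
lemma csum_summable (a : ℕ → Bool) : Summable (fun n => if a n then r ^ (n+1) else 0) := by
  refine Summable.of_abs ?_
  exact (summable_pow_succ hr0 hr1).of_nonneg_of_le (fun n => abs_nonneg _)
    (fun n => csum_term_abs_le hr0 a n)

include hr0 hr1 in
lemma tsum_pow_succ : ∑' n : ℕ, r ^ (n+1) = r * (1 - r)⁻¹ := by
  rw [show (fun n : ℕ => r ^ (n+1)) = fun n : ℕ => r * r ^ n by funext n; rw [pow_succ, mul_comm],
    tsum_mul_left, tsum_geometric_of_lt_one hr0 hr1]

include hr0 hr1 in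
lemma tsum_pow_succ_shift (n : ℕ) : ∑' k : ℕ, r ^ (k + n + 1) = r ^ (n+1) * (1 - r)⁻¹ := by
  have : (fun k : ℕ => r ^ (k + n + 1)) = fun k : ℕ => r ^ n * r ^ (k+1) := by
    funext k; rw [← pow_add]; ring_nf
  rw [this, tsum_mul_left, tsum_pow_succ hr0 hr1]; ring

include hr0 hr1 in
lemma summable_pow_succ_shift (n : ℕ) : Summable (fun k : ℕ => r ^ (k + n + 1)) :=
  ((summable_geometric_of_lt_one hr0 hr1).mul_left (r ^ (n+1))).congr
    (fun k => by rw [← pow_add]; ring_nf)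

include hr0 in
lemma csum_nonneg (a : ℕ → Bool) : 0 ≤ csum r a :=
  tsum_nonneg (fun n => (csum_term_bounds hr0 a n).1)

include hr0 hr1 in
lemma csum_le (a : ℕ → Bool) : csum r a ≤ r * (1 - r)⁻¹ := by
  rw [← tsum_pow_succ hr0 hr1]
  exact Summable.tsum_le_tsum (fun n => (csum_term_bounds hr0 a n).2)
    (csum_summable hr0 hr1 a) (summable_pow_succ hr0 hr1)

include hr0 hr1 in
/-- if `a` and `b` agree below `n` then `|csum r a - csum r b| ≤ r^(n+1) / (1-r)`. -/
lemma csum_dist_le {a b : ℕ → Bool} {n : ℕ} (hab : ∀ k < n, a k = b k) :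
    |csum r a - csum r b| ≤ r ^ (n+1) * (1 - r)⁻¹ := by
  set f : ℕ → ℝ := fun k => (if a k then r ^ (k+1) else 0) - (if b k then r ^ (k+1) else 0) with hf
  have hsf : Summable f := (csum_summable hr0 hr1 a).sub (csum_summable hr0 hr1 b)
  have h1 : csum r a - csum r b = ∑' k, f k :=
    (Summable.tsum_sub (csum_summable hr0 hr1 a) (csum_summable hr0 hr1 b)).symm
  have h2 : ∑' k, f k = (∑ k ∈ Finset.range n, f k) + ∑' k, f (k + n) :=
    (Summable.sum_add_tsum_nat_add' (hsf.comp_injective (add_left_injective n))).symm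
  have h3 : (∑ k ∈ Finset.range n, f k) = 0 :=
    Finset.sum_eq_zero (fun k hk => by simp [hf, hab k (Finset.mem_range.1 hk)])
  have habs : ∀ k, |f (k + n)| ≤ r ^ (k + n + 1) := fun k => by
    rw [hf, abs_sub_le_iff]
    constructor
    · calc _ ≤ (if a (k+n) then r ^ (k+n+1) else 0) := by
            simp [(csum_term_bounds hr0 b (k+n)).1]
        _ ≤ _ := (csum_term_bounds hr0 a (k+n)).2
    · calc _ ≤ (if b (k+n) then r ^ (k+n+1) else 0) := by
            simp [(csum_term_bounds hr0 a (k+n)).1]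
        _ ≤ _ := (csum_term_bounds hr0 b (k+n)).2
  calc |csum r a - csum r b| = |∑' k, f (k + n)| := by rw [h1, h2, h3, zero_add]
    _ ≤ ∑' k, |f (k + n)| := by
        simpa using norm_tsum_le_tsum_norm (f := fun k => f (k + n))
          (hsf.comp_injective (add_left_injective n)).abs
    _ ≤ ∑' k : ℕ, r ^ (k + n + 1) := by
        refine Summable.tsum_le_tsum habs ?_ (summable_pow_succ_shift hr0 hr1 n)
        exact (hsf.comp_injective (add_left_injective n)).abs
    _ = r ^ (n+1) * (1 - r)⁻¹ := tsum_pow_succ_shift hr0 hr1 n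

end basic


section sep
variable {r : ℝ} (hr0 : 0 ≤ r) (hr1 : r < 1)
include hr0 hr1 in
/-- separation: if `a`, `b` agree below `n`, `a n = true`, `b n = false`, then
`csum r a - csum r b ≥ r^(n+1) * (1 - 2r) / (1-r)`. -/
lemma csum_sub_ge {a b : ℕ → Bool} {n : ℕ} (hab : ∀ k < n, a k = b k)
    (han : a n = true) (hbn : b n = false) :
    r ^ (n+1) * (1 - 2*r) * (1 - r)⁻¹ ≤ csum r a - csum r b := by
  set f : ℕ → ℝ := fun k => (if a k then r ^ (k+1) else 0) - (if b k then r ^ (k+1) else 0) with hf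
  have hsf : Summable f := (csum_summable hr0 hr1 a).sub (csum_summable hr0 hr1 b)
  have h1 : csum r a - csum r b = ∑' k, f k :=
    (Summable.tsum_sub (csum_summable hr0 hr1 a) (csum_summable hr0 hr1 b)).symm
  have h2 : ∑' k, f k = (∑ k ∈ Finset.range (n+1), f k) + ∑' k, f (k + (n+1)) :=
    (Summable.sum_add_tsum_nat_add' (hsf.comp_injective (add_left_injective (n+1)))).symm
  have h3 : (∑ k ∈ Finset.range (n+1), f k) = r ^ (n+1) := by
    rw [Finset.sum_range_succ]
    rw [Finset.sum_eq_zero (fun k hk => by simp [hf, hab k (Finset.mem_range.1 hk)])]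
    simp [hf, han, hbn]
  have habs : ∀ k, |f (k + (n+1))| ≤ r ^ (k + (n+1) + 1) := fun k => by
    rw [hf, abs_sub_le_iff]
    constructor
    · calc _ ≤ (if a (k+(n+1)) then r ^ (k+(n+1)+1) else 0) := by
            simp [(csum_term_bounds hr0 b (k+(n+1))).1]
        _ ≤ _ := (csum_term_bounds hr0 a (k+(n+1))).2
    · calc _ ≤ (if b (k+(n+1)) then r ^ (k+(n+1)+1) else 0) := by
            simp [(csum_term_bounds hr0 a (k+(n+1))).1]
        _ ≤ _ := (csum_term_bounds hr0 b (k+(n+1))).2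
  have htail : -(r ^ (n+2) * (1-r)⁻¹) ≤ ∑' k, f (k + (n+1)) := by
    have h5 : |∑' k, f (k + (n+1))| ≤ r ^ (n+2) * (1-r)⁻¹ := by
      calc |∑' k, f (k + (n+1))| ≤ ∑' k, |f (k + (n+1))| := by
            simpa using norm_tsum_le_tsum_norm (f := fun k => f (k + (n+1)))
              (hsf.comp_injective (add_left_injective (n+1))).abs
        _ ≤ ∑' k : ℕ, r ^ (k + (n+1) + 1) := by
            refine Summable.tsum_le_tsum habs ?_ (summable_pow_succ_shift hr0 hr1 (n+1))
            exact (hsf.comp_injective (add_left_injective (n+1))).abs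
        _ = r ^ (n+2) * (1-r)⁻¹ := tsum_pow_succ_shift hr0 hr1 (n+1)
    linarith [neg_abs_le (∑' k, f (k + (n+1)))]
  have key : r ^ (n+1) - r ^ (n+2) * (1-r)⁻¹ ≤ csum r a - csum r b := by
    rw [h1, h2, h3]; linarith
  refine le_trans (le_of_eq ?_) key
  have h1r : (1:ℝ) - r > 0 := by linarith
  field_simp
  ring

end sep

noncomputable def cantorS (r : ℝ) : Set ℝ := Set.range (csum r)


theorem dimH_cantorS_le {r : ℝ} (hr0 : 0 < r) (hr1 : r < 1) (d : ℝ≥0)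
    (hrd : r ^ (d:ℝ) = 1/2) : dimH (cantorS r) ≤ d := by
  have h1r : (0:ℝ) < 1 - r := by linarith
  set c : ℝ := ((1 - r)⁻¹) ^ (d:ℝ) with hc
  have hc0 : 0 < c := Real.rpow_pos_of_pos (inv_pos.2 h1r) _
  set L : ℕ → ℝ≥0∞ := fun n => ENNReal.ofReal (r ^ (n+1) * (1 - r)⁻¹) with hL
  have hL0 : Tendsto L atTop (𝓝 0) := by
    rw [show (0:ℝ≥0∞) = ENNReal.ofReal 0 by simp]
    apply ENNReal.tendsto_ofReal
    have := ((tendsto_pow_atTop_nhds_zero_of_lt_one hr0.le hr1).comp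
      (tendsto_add_atTop_nat 1)).mul_const ((1-r)⁻¹)
    simpa using this
  set t : ∀ n : ℕ, (Fin n → Bool) → Set ℝ :=
    fun n w => csum r '' {a | ∀ k : Fin n, a k = w k} with ht
  have hdiam : ∀ n (w : Fin n → Bool), EMetric.diam (t n w) ≤ L n := by
    intro n w
    apply EMetric.diam_le
    rintro x ⟨a, ha, rfl⟩ y ⟨b, hb, rfl⟩
    rw [edist_dist, Real.dist_eq]
    apply ENNReal.ofReal_le_ofReal
    refine csum_dist_le hr0.le hr1 (fun k hk => ?_)
    rw [ha ⟨k, hk⟩, hb ⟨k, hk⟩]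
  have hcover : ∀ n : ℕ, cantorS r ⊆ ⋃ w : Fin n → Bool, t n w := by
    rintro n x ⟨a, rfl⟩
    exact mem_iUnion.2 ⟨fun k => a k, ⟨a, fun k => rfl, rfl⟩⟩
  have key := Measure.hausdorffMeasure_le_liminf_sum (d:ℝ) (cantorS r) L hL0 t
    (Eventually.of_forall hdiam) (Eventually.of_forall hcover)
  have hsum : ∀ n : ℕ, (∑ w : Fin n → Bool, EMetric.diam (t n w) ^ (d:ℝ))
      ≤ ENNReal.ofReal c := by
    intro n
    have h1 : ∀ w : Fin n → Bool, EMetric.diam (t n w) ^ (d:ℝ)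
        ≤ ENNReal.ofReal ((1/2) ^ (n+1) * c) := by
      intro w
      calc EMetric.diam (t n w) ^ (d:ℝ) ≤ (L n) ^ (d:ℝ) :=
            ENNReal.rpow_le_rpow (hdiam n w) d.coe_nonneg
        _ = ENNReal.ofReal ((r ^ (n+1) * (1 - r)⁻¹) ^ (d:ℝ)) := by
            rw [hL, ENNReal.ofReal_rpow_of_pos (by positivity)]
        _ = ENNReal.ofReal ((1/2) ^ (n+1) * c) := by
            congr 1
            rw [Real.mul_rpow (by positivity) (by positivity), hc]
            congr 1
            rw [← Real.rpow_natCast r (n+1), ← Real.rpow_mul hr0.le, mul_comm,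
              Real.rpow_mul hr0.le, hrd, Real.rpow_natCast]
    calc (∑ w : Fin n → Bool, EMetric.diam (t n w) ^ (d:ℝ))
        ≤ ∑ _w : Fin n → Bool, ENNReal.ofReal ((1/2) ^ (n+1) * c) :=
          Finset.sum_le_sum (fun w _ => h1 w)
      _ = (2:ℝ≥0∞) ^ n * ENNReal.ofReal ((1/2) ^ (n+1) * c) := by
          rw [Finset.sum_const, nsmul_eq_mul]
          congr 1
          simp [Fintype.card_fun]
      _ = ENNReal.ofReal ((2:ℝ) ^ n * ((1/2) ^ (n+1) * c)) := by
          rw [ENNReal.ofReal_mul (by positivity : (0:ℝ) ≤ 2 ^ n),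
            ENNReal.ofReal_pow (by norm_num : (0:ℝ) ≤ 2),
            ENNReal.ofReal_mul (by positivity : (0:ℝ) ≤ (1/2:ℝ) ^ (n+1))]
          norm_num
      _ ≤ ENNReal.ofReal c := by
          apply ENNReal.ofReal_le_ofReal
          have h2 : (2:ℝ)^n * ((1/2)^(n+1) * c) = (2 * (1/2))^n * ((1/2) * c) := by
            rw [mul_pow, pow_succ]; ring
          rw [h2]; norm_num; linarith
  have hlim : liminf (fun n => ∑ w : Fin n → Bool, EMetric.diam (t n w) ^ (d:ℝ)) atTop
      ≤ ENNReal.ofReal c := by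
    refine le_trans (liminf_le_liminf (Eventually.of_forall hsum)) ?_
    simp [liminf_const]
  exact dimH_le_of_hausdorffMeasure_ne_top (ne_top_of_le_ne_top ENNReal.ofReal_ne_top (key.trans hlim))



/-- prepend a digit -/
def bcons (c : Bool) (a : ℕ → Bool) : ℕ → Bool := fun n => Nat.casesOn n c a

lemma csum_bcons {r : ℝ} (hr0 : 0 ≤ r) (hr1 : r < 1) (c : Bool) (a : ℕ → Bool) :
    csum r (bcons c a) = (if c then r else 0) + r * csum r a := by
  unfold csum
  rw [Summable.tsum_eq_zero_add (csum_summable hr0 hr1 (bcons c a))]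
  have h1 : (fun n : ℕ => if bcons c a (n+1) then r ^ (n+1+1) else 0)
      = fun n : ℕ => r * (if a n then r ^ (n+1) else 0) := by
    funext n
    simp only [bcons]
    split <;> ring_nf <;> simp_all
  rw [h1, tsum_mul_left]
  simp only [show bcons c a 0 = c from rfl]
  cases c <;> simp

lemma csum_const_false {r : ℝ} : csum r (fun _ => false) = 0 := by
  unfold csum; simp

lemma csum_const_true {r : ℝ} (hr0 : 0 ≤ r) (hr1 : r < 1) :
    csum r (fun _ => true) = r * (1 - r)⁻¹ := by
  unfold csum; simp only [if_pos]; exact tsum_pow_succ hr0 hr1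

lemma csum_half_const_true : csum (1/2) (fun _ => true) = 1 := by
  rw [csum_const_true (by norm_num) (by norm_num)]; norm_num

/-- every dyadic rational `k / 2^n` with `k ≤ 2^n` is in the range of `csum (1/2)` -/
lemma dyadic_mem : ∀ n : ℕ, ∀ k : ℕ, k ≤ 2 ^ n → ∃ a : ℕ → Bool, csum (1/2) a = k / 2 ^ n := by
  intro n
  induction n with
  | zero =>
    intro k hk
    interval_cases k
    · exact ⟨fun _ => false, by simp [csum_const_false]⟩
    · exact ⟨fun _ => true, by rw [csum_half_const_true]; norm_num⟩
  | succ n ih =>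
    intro k hk
    by_cases hkn : k ≤ 2 ^ n
    · obtain ⟨a, ha⟩ := ih k hkn
      refine ⟨bcons false a, ?_⟩
      rw [csum_bcons (by norm_num) (by norm_num), ha]
      simp only [if_neg Bool.false_ne_true]
      rw [pow_succ]
      field_simp
      ring
    · push_neg at hkn
      obtain ⟨a, ha⟩ := ih (k - 2 ^ n) (by omega)
      refine ⟨bcons true a, ?_⟩
      rw [csum_bcons (by norm_num) (by norm_num), ha]
      simp only [if_pos]
      have h2 : ((k - 2^n : ℕ) : ℝ) = (k : ℝ) - 2^n := by
        push_cast [Nat.cast_sub hkn.le]; ring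
      rw [h2, pow_succ]
      have : (2:ℝ) ^ n ≠ 0 := by positivity
      field_simp
      ring_nf

lemma continuous_csum {r : ℝ} (hr0 : 0 ≤ r) (hr1 : r < 1) : Continuous (csum r) := by
  apply continuous_tsum (u := fun n : ℕ => r ^ (n+1))
  · intro n
    exact (continuous_of_discreteTopology (f := fun b : Bool => if b then r ^ (n+1) else 0)).comp
      (continuous_apply n)
  · simpa [pow_succ, mul_comm] using (summable_geometric_of_lt_one hr0 hr1).mul_left r
  · intro n a
    rw [Real.norm_eq_abs]
    split <;> simp [abs_of_nonneg, pow_nonneg hr0]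

lemma isCompact_cantorS {r : ℝ} (hr0 : 0 ≤ r) (hr1 : r < 1) : IsCompact (cantorS r) :=
  isCompact_range (continuous_csum hr0 hr1)

lemma Icc_subset_cantorS_half : Icc (0:ℝ) 1 ⊆ cantorS (1/2) := by
  have hcl : IsClosed (cantorS (1/2)) :=
    (isCompact_cantorS (by norm_num) (by norm_num)).isClosed
  intro x hx
  rw [← hcl.closure_eq]
  apply Metric.mem_closure_iff.2
  intro ε hε
  obtain ⟨n, hn⟩ := exists_pow_lt_of_lt_one hε (show (1:ℝ)/2 < 1 by norm_num)
  set k : ℕ := ⌊x * 2 ^ n⌋.toNat with hkdef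
  have hx0 : 0 ≤ x * 2 ^ n := mul_nonneg hx.1 (by positivity)
  have hfl0 : (0:ℤ) ≤ ⌊x * 2 ^ n⌋ := Int.floor_nonneg.2 hx0
  have h2n : (0:ℝ) < 2 ^ n := by positivity
  have hkfl : (k:ℝ) = ⌊x * 2 ^ n⌋ := by
    rw [hkdef]; exact_mod_cast congrArg Int.cast (Int.toNat_of_nonneg hfl0)
  have hkle : k ≤ 2 ^ n := by
    have h1 : ⌊x * 2 ^ n⌋ ≤ (2 ^ n : ℕ) := by
      have hle : x * 2 ^ n ≤ ((2 ^ n : ℕ) : ℝ) := by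
        calc x * 2 ^ n ≤ 1 * 2 ^ n := mul_le_mul_of_nonneg_right hx.2 (by positivity)
          _ = ((2 ^ n : ℕ) : ℝ) := by push_cast; ring
      calc ⌊x * 2 ^ n⌋ ≤ ⌊((2 ^ n : ℕ) : ℝ)⌋ := Int.floor_mono hle
        _ = (2 ^ n : ℕ) := Int.floor_natCast _
    omega
  obtain ⟨a, ha⟩ := dyadic_mem n k hkle
  refine ⟨csum (1/2) a, ⟨a, rfl⟩, ?_⟩
  rw [ha, Real.dist_eq]
  have hb1 : (k:ℝ) / 2 ^ n ≤ x := by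
    rw [div_le_iff₀ h2n, hkfl]
    exact Int.floor_le _
  have hb2 : x - (k:ℝ) / 2 ^ n < (1/2) ^ n := by
    have hlt : x * 2 ^ n < (k:ℝ) + 1 := by
      rw [hkfl]; exact Int.lt_floor_add_one _
    have : x < ((k:ℝ) + 1) / 2 ^ n := by
      rw [lt_div_iff₀ h2n]; exact hlt
    have hpow : (1/2:ℝ) ^ n = 1 / 2 ^ n := by rw [div_pow]; norm_num
    rw [hpow]
    calc x - (k:ℝ) / 2 ^ n < ((k:ℝ) + 1) / 2 ^ n - (k:ℝ) / 2 ^ n := by linarith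
      _ = 1 / 2 ^ n := by ring
  rw [abs_of_nonneg (by linarith)]
  linarith



lemma csum_abs_sep {r : ℝ} (hr0 : 0 ≤ r) (hr1 : r < 1) {a b : ℕ → Bool} {n : ℕ}
    (hab : ∀ k < n, a k = b k) (hn : a n ≠ b n) :
    r ^ (n+1) * (1 - 2*r) * (1 - r)⁻¹ ≤ |csum r a - csum r b| := by
  cases han : a n
  · have hbn : b n = true := by
      cases hbn' : b n
      · exact absurd (han.trans hbn'.symm) hn
      · rfl
    have := csum_sub_ge hr0 hr1 (fun k hk => (hab k hk).symm) hbn han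
    calc r ^ (n+1) * (1 - 2*r) * (1 - r)⁻¹ ≤ csum r b - csum r a := this
      _ ≤ |csum r a - csum r b| := by rw [abs_sub_comm]; exact le_abs_self _
  · have hbn : b n = false := by
      cases hbn' : b n
      · rfl
      · exact absurd (han.trans hbn'.symm) hn
    have := csum_sub_ge hr0 hr1 hab han hbn
    exact this.trans (le_abs_self _)

lemma csum_injective {r : ℝ} (hr0 : 0 < r) (hr2 : r < 1/2) : Injective (csum r) := by
  intro a b hab
  by_contra hne
  have hex : ∃ n, a n ≠ b n := by
    by_contra hno
    push_neg at hno
    exact hne (funext hno)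
  set n := Nat.find hex with hn
  have h1 : ∀ k < n, a k = b k := fun k hk => by
    have := Nat.find_min hex hk
    simpa using this
  have h2 := csum_abs_sep hr0.le (by linarith) h1 (Nat.find_spec hex)
  rw [hab, sub_self, abs_zero] at h2
  have : 0 < r ^ (n+1) * (1 - 2*r) * (1 - r)⁻¹ := by
    apply mul_pos (mul_pos (by positivity) (by linarith))
    rw [inv_pos]; linarith
  linarith

theorem le_dimH_cantorS {r : ℝ} (hr0 : 0 < r) (hr2 : r < 1/2) {d : ℝ≥0} (hd : 0 < d)
    (hrd : r ^ (d:ℝ) = 1/2) : (d : ℝ≥0∞) ≤ dimH (cantorS r) := by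
  have hr1 : r < 1 := by linarith
  set γ : ℝ := (1 - 2*r) * (1 - r)⁻¹ with hγ
  have hγ0 : 0 < γ := by
    apply mul_pos (by linarith)
    rw [inv_pos]; linarith
  have hγd0 : 0 < γ ^ (d:ℝ) := Real.rpow_pos_of_pos hγ0 _
  set c : ℝ := 2 / γ ^ (d:ℝ) with hc
  have hc0 : 0 < c := by positivity
  set f : ℝ → ℝ := fun x => csum (1/2) (invFun (csum r) x) with hf
  have hinj := csum_injective hr0 hr2
  have hleft : ∀ a, invFun (csum r) (csum r a) = a := leftInverse_invFun hinj
  -- Hölder bound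
  have hHolder : HolderOnWith c.toNNReal d f (cantorS r) := by
    rintro x ⟨a, rfl⟩ y ⟨b, rfl⟩
    rw [hf]
    simp only [hleft]
    by_cases hab : a = b
    · subst hab; simp
    have hex : ∃ n, a n ≠ b n := by
      by_contra hno
      push_neg at hno
      exact hab (funext hno)
    set n := Nat.find hex with hn
    have hfirst : ∀ k < n, a k = b k := fun k hk => by
      have := Nat.find_min hex hk
      simpa using this
    have h1 : |csum (1/2) a - csum (1/2) b| ≤ (1/2:ℝ) ^ n := by
      have := csum_dist_le (by norm_num : (0:ℝ) ≤ 1/2) (by norm_num) hfirst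
      calc |csum (1/2) a - csum (1/2) b| ≤ (1/2:ℝ) ^ (n+1) * (1 - 1/2)⁻¹ := this
        _ = (1/2:ℝ) ^ n := by
            rw [pow_succ, show ((1:ℝ) - 1/2)⁻¹ = 2 by norm_num]; ring
    have h2 : γ * r ^ (n+1) ≤ |csum r a - csum r b| := by
      have := csum_abs_sep hr0.le hr1 hfirst (Nat.find_spec hex)
      calc γ * r ^ (n+1) = r ^ (n+1) * (1 - 2*r) * (1 - r)⁻¹ := by rw [hγ]; ring
        _ ≤ _ := this
    -- the real inequality
    have hreal : |csum (1/2) a - csum (1/2) b| ≤ c * |csum r a - csum r b| ^ (d:ℝ) := by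
      have h3 : (γ * r ^ (n+1)) ^ (d:ℝ) ≤ |csum r a - csum r b| ^ (d:ℝ) :=
        Real.rpow_le_rpow (by positivity) h2 d.coe_nonneg
      have h4 : (γ * r ^ (n+1)) ^ (d:ℝ) = γ ^ (d:ℝ) * (1/2:ℝ) ^ (n+1) := by
        rw [Real.mul_rpow hγ0.le (by positivity)]
        congr 1
        rw [← Real.rpow_natCast r (n+1), ← Real.rpow_mul hr0.le, mul_comm,
          Real.rpow_mul hr0.le, hrd, Real.rpow_natCast]
      calc |csum (1/2) a - csum (1/2) b| ≤ (1/2:ℝ) ^ n := h1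
        _ = c * (γ ^ (d:ℝ) * (1/2:ℝ) ^ (n+1)) := by
            rw [hc, pow_succ]
            field_simp
        _ ≤ c * |csum r a - csum r b| ^ (d:ℝ) := by
            apply mul_le_mul_of_nonneg_left _ hc0.le
            rw [← h4]; exact h3
    -- translate to edist
    rw [edist_dist, edist_dist, Real.dist_eq, Real.dist_eq,
      ENNReal.ofReal_rpow_of_nonneg (abs_nonneg _) d.coe_nonneg]
    calc ENNReal.ofReal |csum (1/2) a - csum (1/2) b|
        ≤ ENNReal.ofReal (c * |csum r a - csum r b| ^ (d:ℝ)) := ENNReal.ofReal_le_ofReal hreal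
      _ = ↑c.toNNReal * ENNReal.ofReal (|csum r a - csum r b| ^ (d:ℝ)) := by
          rw [ENNReal.ofReal_mul hc0.le]; rfl
  -- image contains [0,1]
  have hIcc : Icc (0:ℝ) 1 ⊆ f '' cantorS r := by
    intro x hx
    obtain ⟨a, ha⟩ := Icc_subset_cantorS_half hx
    exact ⟨csum r a, ⟨a, rfl⟩, by rw [hf]; simp only [hleft]; exact ha⟩
  have h1le : (1:ℝ≥0∞) ≤ dimH (f '' cantorS r) := by
    calc (1:ℝ≥0∞) = dimH (Icc (0:ℝ) 1) := by
          rw [Real.dimH_of_nonempty_interior (E := ℝ)]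
          · simp
          · rw [interior_Icc]; exact ⟨1/2, by norm_num⟩
      _ ≤ _ := dimH_mono hIcc
  have hH := hHolder.dimH_image_le hd
  have := h1le.trans hH
  rw [ENNReal.le_div_iff_mul_le (Or.inl (by exact_mod_cast hd.ne')) (Or.inl ENNReal.coe_ne_top),
    one_mul] at this
  exact this



lemma two_mul_injective : Injective (fun k : ℕ => 2 * k) := fun a b h => by dsimp at h; omega
lemma two_mul_add_one_injective : Injective (fun k : ℕ => 2 * k + 1) := fun a b h => by dsimp at h; omega

/-- every point of `[0,1]` is `u + 2v` with `u, v` in the quarter Cantor set. -/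
lemma Icc_subset_quarter_sum :
    Icc (0:ℝ) 1 ⊆ cantorS (1/4) + (fun x : ℝ => 2 * x) '' cantorS (1/4) := by
  intro x hx
  obtain ⟨a, ha⟩ := Icc_subset_cantorS_half hx
  set t : ℕ → ℝ := fun n => if a n then (1/2:ℝ) ^ (n+1) else 0 with htdef
  have hst : Summable t := csum_summable (by norm_num) (by norm_num) a
  have he : Summable (fun k => t (2 * k)) := hst.comp_injective two_mul_injective
  have ho : Summable (fun k => t (2 * k + 1)) := hst.comp_injective two_mul_add_one_injective
  have hsplit : (∑' k, t (2 * k)) + ∑' k, t (2 * k + 1) = ∑' n, t n :=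
    tsum_even_add_odd he ho
  have heven : (∑' k, t (2 * k)) = 2 * csum (1/4) (fun k => a (2 * k)) := by
    unfold csum
    rw [← tsum_mul_left]
    congr 1
    funext k
    rw [htdef]
    simp only
    split
    · rw [show (1/4:ℝ) = (1/2)^2 by norm_num, ← pow_mul]
      ring_nf
    · ring
  have hodd : (∑' k, t (2 * k + 1)) = csum (1/4) (fun k => a (2 * k + 1)) := by
    unfold csum
    congr 1
    funext k
    rw [htdef]
    simp only
    split
    · rw [show (1/4:ℝ) = (1/2)^2 by norm_num, ← pow_mul]
      ring_nf
    · rfl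
  rw [Set.mem_add]
  refine ⟨csum (1/4) (fun k => a (2 * k + 1)), ⟨_, rfl⟩,
    2 * csum (1/4) (fun k => a (2 * k)), ⟨csum (1/4) (fun k => a (2 * k)), ⟨_, rfl⟩, rfl⟩, ?_⟩
  rw [← hodd, ← heven]
  rw [add_comm, hsplit]
  exact ha

set_option maxHeartbeats 1000000 in
/-- partial sums approximate `csum` from below. -/
lemma csum_partial_bounds {r : ℝ} (hr0 : 0 ≤ r) (hr1 : r < 1) (a : ℕ → Bool) (n : ℕ) :
    (∑ k ∈ Finset.range n, if a k then r ^ (k+1) else 0) ≤ csum r a ∧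
    csum r a ≤ (∑ k ∈ Finset.range n, if a k then r ^ (k+1) else 0) + r ^ (n+1) * (1 - r)⁻¹ := by
  have hs := csum_summable hr0 hr1 a
  have hshift : Summable (fun k => if a (k + n) then r ^ (k + n + 1) else 0) :=
    hs.comp_injective (add_left_injective n)
  have hdecomp : csum r a = (∑ k ∈ Finset.range n, if a k then r ^ (k+1) else 0)
      + ∑' k, (if a (k + n) then r ^ (k + n + 1) else 0) := by
    exact (Summable.sum_add_tsum_nat_add' hshift).symm
  have htail0 : 0 ≤ ∑' k, (if a (k + n) then r ^ (k + n + 1) else 0) :=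
    tsum_nonneg (fun k => (csum_term_bounds hr0 a (k+n)).1)
  have htail1 : (∑' k, (if a (k + n) then r ^ (k + n + 1) else 0)) ≤ r ^ (n+1) * (1 - r)⁻¹ := by
    rw [← tsum_pow_succ_shift hr0 hr1 n]
    exact Summable.tsum_le_tsum (fun k => (csum_term_bounds hr0 a (k+n)).2) hshift
      (summable_pow_succ_shift hr0 hr1 n)
  constructor
  · rw [hdecomp]; linarith
  · rw [hdecomp]; linarith

/-- for `r < 1/4` the sumset of the Cantor set with itself is Lebesgue-null. -/
lemma volume_cantorS_add_self {r : ℝ} (hr0 : 0 < r) (hr4 : r < 1/4) :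
    volume (cantorS r + cantorS r) = 0 := by
  have hr1 : r < 1 := by linarith
  have h1r : (0:ℝ) < 1 - r := by linarith
  set c : ℝ := 2 * (r * (1 - r)⁻¹) with hc
  have hc0 : 0 < c := by positivity
  -- the cover at level n
  set g : ∀ n : ℕ, (Fin n → Bool) → ℝ :=
    fun n w => ∑ k : Fin n, (if w k then r ^ ((k:ℕ)+1) else 0) with hg
  have hcover : ∀ n, cantorS r + cantorS r ⊆
      ⋃ p : (Fin n → Bool) × (Fin n → Bool),
        Icc (g n p.1 + g n p.2) (g n p.1 + g n p.2 + r^n * c) := by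
    intro n x hxmem
    rw [Set.mem_add] at hxmem
    obtain ⟨u, ⟨a, rfl⟩, v, ⟨b, rfl⟩, rfl⟩ := hxmem
    refine mem_iUnion.2 ⟨((fun k : Fin n => a k), (fun k : Fin n => b k)), ?_⟩
    have hpa : g n (fun k : Fin n => a k) = ∑ k ∈ Finset.range n, if a k then r ^ (k+1) else 0 :=
      Fin.sum_univ_eq_sum_range (fun k => if a k then r ^ (k+1) else 0) n
    have hpb : g n (fun k : Fin n => b k) = ∑ k ∈ Finset.range n, if b k then r ^ (k+1) else 0 :=
      Fin.sum_univ_eq_sum_range (fun k => if b k then r ^ (k+1) else 0) n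
    have ha' := csum_partial_bounds hr0.le hr1 a n
    have hb' := csum_partial_bounds hr0.le hr1 b n
    have htail : 2 * (r ^ (n+1) * (1 - r)⁻¹) ≤ r^n * c := by
      rw [hc, pow_succ]; ring_nf; exact le_refl _
    constructor
    · simp only [hpa, hpb]
      exact add_le_add ha'.1 hb'.1
    · simp only [hpa, hpb]
      have := add_le_add ha'.2 hb'.2
      calc csum r a + csum r b ≤ (∑ k ∈ Finset.range n, if a k then r ^ (k+1) else 0)
            + (∑ k ∈ Finset.range n, if b k then r ^ (k+1) else 0)
            + 2 * (r ^ (n+1) * (1 - r)⁻¹) := by linarith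
        _ ≤ _ := by linarith
  -- volume bound at level n
  have hbound : ∀ n : ℕ, volume (cantorS r + cantorS r)
      ≤ ENNReal.ofReal (r^n * c * (4:ℝ)^n) := by
    intro n
    calc volume (cantorS r + cantorS r)
        ≤ ∑ p : (Fin n → Bool) × (Fin n → Bool),
            volume (Icc (g n p.1 + g n p.2) (g n p.1 + g n p.2 + r^n * c)) :=
          le_trans (measure_mono (hcover n)) (measure_iUnion_fintype_le _ _)
      _ = ∑ _p : (Fin n → Bool) × (Fin n → Bool), ENNReal.ofReal (r^n * c) := by
          apply Finset.sum_congr rfl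
          intro p _
          rw [Real.volume_Icc]
          congr 1
          ring
      _ = ENNReal.ofReal (r^n * c * (4:ℝ)^n) := by
          have hcardN : Fintype.card ((Fin n → Bool) × (Fin n → Bool)) = 4 ^ n := by
            rw [show (4:ℕ) = 2 * 2 from rfl, mul_pow]
            simp [Fintype.card_fun]
          rw [Finset.sum_const, Finset.card_univ, nsmul_eq_mul, hcardN,
            ENNReal.ofReal_mul (by positivity : (0:ℝ) ≤ r^n * c),
            show ENNReal.ofReal ((4:ℝ)^n) = ((4:ℕ) ^ n : ℕ) by
              rw [ENNReal.ofReal_pow (by norm_num)]; norm_cast]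
          ring
  -- conclude
  have htend : Tendsto (fun n : ℕ => ENNReal.ofReal (r^n * c * (4:ℝ)^n)) atTop (𝓝 0) := by
    rw [show (0:ℝ≥0∞) = ENNReal.ofReal 0 by simp]
    apply ENNReal.tendsto_ofReal
    have h4r : |4 * r| < 1 := by rw [abs_of_pos (by positivity)]; linarith
    have := (tendsto_pow_atTop_nhds_zero_of_abs_lt_one h4r).mul_const c
    simp only [zero_mul] at this
    refine this.congr (fun n => ?_)
    rw [mul_pow]
    ring
  have := ge_of_tendsto' htend hbound
  simpa using this



lemma cantorS_subset_Icc' {r : ℝ} (hr0 : 0 ≤ r) (hr1 : r < 1) :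
    cantorS r ⊆ Icc 0 (r * (1 - r)⁻¹) := by
  rintro x ⟨a, rfl⟩
  exact ⟨csum_nonneg hr0 a, csum_le hr0 hr1 a⟩

lemma cantorS_subset_Icc01 {r : ℝ} (hr0 : 0 ≤ r) (hr2 : r < 1/2) :
    cantorS r ⊆ Icc 0 1 := by
  have h1r : (0:ℝ) < 1 - r := by linarith
  refine (cantorS_subset_Icc' hr0 (by linarith)).trans (Icc_subset_Icc le_rfl ?_)
  rw [← div_eq_mul_inv, div_le_one h1r]
  linarith

lemma rpow_fact {h : ℝ} (h0 : 0 < h) : ((2:ℝ) ^ (-(1/h))) ^ ((h.toNNReal : ℝ)) = 1/2 := by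
  rw [Real.coe_toNNReal _ h0.le, ← Real.rpow_mul (by norm_num : (0:ℝ) ≤ 2),
    show -(1/h) * h = -1 by field_simp, Real.rpow_neg_one]
  norm_num

lemma rho_lt_half {h : ℝ} (h0 : 0 < h) (h1 : h < 1) : (2:ℝ) ^ (-(1/h)) < 1/2 := by
  rw [show (1/2:ℝ) = (2:ℝ) ^ (-1:ℝ) by rw [Real.rpow_neg_one]; norm_num]
  refine (Real.rpow_lt_rpow_left_iff (by norm_num : (1:ℝ) < 2)).2 ?_
  have : 1 < 1/h := one_lt_one_div h0 h1
  linarith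

lemma dimH_cantor_rho {h : ℝ} (h0 : 0 < h) (h1 : h < 1) :
    dimH (cantorS ((2:ℝ) ^ (-(1/h)))) = ENNReal.ofReal h := by
  have hρ0 : 0 < (2:ℝ) ^ (-(1/h)) := Real.rpow_pos_of_pos (by norm_num) _
  have hρhalf := rho_lt_half h0 h1
  have hd0 : 0 < h.toNNReal := Real.toNNReal_pos.2 h0
  have hfact := rpow_fact h0
  have hofReal : ENNReal.ofReal h = (h.toNNReal : ℝ≥0∞) := rfl
  rw [hofReal]
  exact le_antisymm (dimH_cantorS_le hρ0 (by linarith) _ hfact)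
    (le_dimH_cantorS hρ0 hρhalf hd0 hfact)

lemma dimH_quarter_le : dimH (cantorS (1/4)) ≤ ENNReal.ofReal (1/2) := by
  have hpow : ((1/4:ℝ)) ^ (((1/2 : ℝ).toNNReal : ℝ)) = 1/2 := by
    rw [Real.coe_toNNReal _ (by norm_num),
      show (1/4:ℝ) = (1/2:ℝ)^(2:ℕ) by norm_num,
      ← Real.rpow_natCast ((1/2:ℝ)) 2, ← Real.rpow_mul (by norm_num)]
    norm_num
  exact dimH_cantorS_le (by norm_num) (by norm_num) _ hpow

lemma lipschitz_double : LipschitzWith 2 (fun x : ℝ => 2 * x) := by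
  apply LipschitzWith.of_dist_le_mul
  intro x y
  rw [Real.dist_eq, Real.dist_eq, ← mul_sub, abs_mul]
  norm_num

-- MAIN

/-- For every `h ∈ [0,1]` there is a set `E ⊆ [0,1]` of Hausdorff dimension `h` such that
`E + E` has positive Lebesgue measure iff `h ∈ [1/2, 1]`. -/
theorem exists_dimH_with_sumset_measure_iff (h : ℝ) (hh : h ∈ Set.Icc (0 : ℝ) 1) :
    ∃ E : Set ℝ, E ⊆ Set.Icc 0 1 ∧ dimH E = ENNReal.ofReal h ∧
      (0 < volume (E + E) ↔ 1 / 2 ≤ h) := by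
  obtain ⟨h0, h1⟩ := hh
  rcases eq_or_lt_of_le h0 with hz | h0pos
  · -- h = 0
    refine ⟨{0}, by norm_num, ?_, ?_⟩
    · rw [dimH_singleton, ← hz]; simp
    · constructor
      · intro hvol
        exfalso
        have hs : ({(0:ℝ)} + {(0:ℝ)} : Set ℝ) = {0} := by simp
        rw [hs, Real.volume_singleton] at hvol
        exact lt_irrefl _ hvol
      · intro hle; exfalso; rw [← hz] at hle; norm_num at hle
  rcases eq_or_lt_of_le h1 with ho | h1lt
  · -- h = 1
    refine ⟨Icc 0 1, subset_rfl, ?_, ?_⟩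
    · rw [Real.dimH_of_nonempty_interior (E := ℝ)
        (by rw [interior_Icc]; exact ⟨1/2, by norm_num⟩)]
      rw [ho]
      simp
    · constructor
      · intro _; rw [ho]; norm_num
      · intro _
        rw [Set.Icc_add_Icc (by norm_num : (0:ℝ) ≤ 1) (by norm_num : (0:ℝ) ≤ 1)]
        rw [Real.volume_Icc]
        rw [ENNReal.ofReal_pos]
        norm_num
  -- 0 < h < 1
  have hρ0 : 0 < (2:ℝ) ^ (-(1/h)) := Real.rpow_pos_of_pos (by norm_num) _
  have hρhalf := rho_lt_half h0pos h1lt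
  have hdim := dimH_cantor_rho h0pos h1lt
  rcases lt_or_ge h (1/2) with hsmall | hbig
  · -- small case : E = cantorS ρ
    have hρ4 : (2:ℝ) ^ (-(1/h)) < 1/4 := by
      rw [show (1/4:ℝ) = (2:ℝ) ^ (-2:ℝ) by
        rw [show (-2:ℝ) = ((-2:ℤ):ℝ) by norm_num, Real.rpow_intCast]; norm_num]
      refine (Real.rpow_lt_rpow_left_iff (by norm_num : (1:ℝ) < 2)).2 ?_
      have : 2 < 1/h := by rw [lt_div_iff₀ h0pos]; linarith
      linarith
    refine ⟨cantorS ((2:ℝ) ^ (-(1/h))), cantorS_subset_Icc01 hρ0.le hρhalf, hdim, ?_⟩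
    have hnull := volume_cantorS_add_self hρ0 hρ4
    constructor
    · intro hvol; rw [hnull] at hvol; exact absurd hvol (lt_irrefl _)
    · intro hle; linarith
  · -- big case : E = A ∪ B ∪ C
    refine ⟨(cantorS (1/4) ∪ (fun x : ℝ => 2 * x) '' cantorS (1/4)) ∪ cantorS ((2:ℝ) ^ (-(1/h))),
      ?_, ?_, ?_⟩
    · refine union_subset (union_subset ?_ ?_) ?_
      · exact cantorS_subset_Icc01 (by norm_num) (by norm_num)
      · rintro x ⟨y, hy, rfl⟩
        have hmem := cantorS_subset_Icc' (by norm_num : (0:ℝ) ≤ 1/4) (by norm_num) hy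
        rw [show (1/4:ℝ) * (1 - 1/4)⁻¹ = 1/3 by norm_num] at hmem
        exact ⟨by simp; linarith [hmem.1], by simp; linarith [hmem.2]⟩
      · exact cantorS_subset_Icc01 hρ0.le hρhalf
    · rw [dimH_union, dimH_union, hdim]
      have hhalf_le : ENNReal.ofReal (1/2) ≤ ENNReal.ofReal h := ENNReal.ofReal_le_ofReal hbig
      have hA : dimH (cantorS (1/4)) ≤ ENNReal.ofReal h := dimH_quarter_le.trans hhalf_le
      have hB : dimH ((fun x : ℝ => 2 * x) '' cantorS (1/4)) ≤ ENNReal.ofReal h :=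
        le_trans (lipschitz_double.dimH_image_le _) hA
      rw [max_eq_right (max_le hA hB)]
    · constructor
      · intro _; exact hbig
      · intro _
        have hsub : Icc (0:ℝ) 1 ⊆
            ((cantorS (1/4) ∪ (fun x : ℝ => 2 * x) '' cantorS (1/4)) ∪ cantorS ((2:ℝ) ^ (-(1/h))))
            + ((cantorS (1/4) ∪ (fun x : ℝ => 2 * x) '' cantorS (1/4)) ∪ cantorS ((2:ℝ) ^ (-(1/h)))) := by
          refine Icc_subset_quarter_sum.trans (Set.add_subset_add ?_ ?_)
          · exact subset_union_left.trans subset_union_left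
          · exact subset_union_right.trans subset_union_left
        calc (0:ℝ≥0∞) < ENNReal.ofReal 1 := by norm_num
          _ = volume (Icc (0:ℝ) 1) := by rw [Real.volume_Icc]; norm_num
          _ ≤ _ := measure_mono hsub
end

section
/- Let n ≥ 1 and let 𝒜 be a family of zero sets of nonzero polynomials in n real variables with |𝒜| strictly less than the cardinality of the continuum. Then the union ⋃_{A ∈ 𝒜} A has n-dimensional inner Lebesgue measure zero. -/
open MeasureTheory Cardinal

/-- A measurable subset of `ℝ` of positive measure has cardinality continuum. -/
private lemma continuum_le_mk_of_pos {S : Set ℝ} (hS : MeasurableSet S)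
    (h : volume S ≠ 0) : Cardinal.continuum ≤ Cardinal.mk S := by
  obtain ⟨K, hKS, hKc, hK⟩ := hS.exists_lt_isCompact (pos_iff_ne_zero.mpr h)
  have hunc : ¬ K.Countable := by
    intro hc
    exact absurd (hc.measure_zero volume) (by simpa using hK.ne')
  obtain ⟨f, hf1, _, hf3⟩ := hKc.isClosed.exists_nat_bool_injection_of_not_countable hunc
  have : #(ℕ → Bool) ≤ #S := by
    refine Cardinal.mk_le_of_injective (f := fun x => (⟨f x, hKS (hf1 ⟨x, rfl⟩)⟩ : S)) ?_
    intro a b hab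
    exact hf3 (by simpa using hab)
  simpa [Cardinal.mk_arrow] using this

private lemma slice_poly_eval (n : ℕ) (Pa : MvPolynomial (Fin (n + 1)) ℝ) (t : ℝ)
    (y : Fin n → ℝ) :
    MvPolynomial.eval (Fin.cons t y) Pa =
      MvPolynomial.eval y
        (Polynomial.eval (MvPolynomial.C t) (MvPolynomial.finSuccEquiv ℝ n Pa)) := by
  rw [MvPolynomial.eval_eq_eval_mv_eval', Polynomial.eval_map]
  have := Polynomial.eval₂_hom (MvPolynomial.eval y) (MvPolynomial.C t)
    (p := MvPolynomial.finSuccEquiv ℝ n Pa)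
  simpa [MvPolynomial.eval_C] using this

private lemma slice_poly_bad_finite (n : ℕ) (Pa : MvPolynomial (Fin (n + 1)) ℝ)
    (hPa : Pa ≠ 0) :
    {t : ℝ | Polynomial.eval (MvPolynomial.C t) (MvPolynomial.finSuccEquiv ℝ n Pa) = 0}.Finite := by
  have hQ0 : MvPolynomial.finSuccEquiv ℝ n Pa ≠ 0 := by
    intro h
    exact hPa ((MvPolynomial.finSuccEquiv ℝ n).injective (by rw [h, map_zero]))
  have hfin : {z : MvPolynomial (Fin n) ℝ | (MvPolynomial.finSuccEquiv ℝ n Pa).IsRoot z}.Finite :=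
    Polynomial.finite_setOf_isRoot hQ0
  exact Set.Finite.preimage ((MvPolynomial.C_injective (Fin n) ℝ).injOn) hfin

private lemma key_induction : ∀ n (𝒜 : Set (Set (Fin n → ℝ))),
    (∀ A ∈ 𝒜, ∃ P : MvPolynomial (Fin n) ℝ, P ≠ 0 ∧
      A = {x : Fin n → ℝ | MvPolynomial.eval x P = 0}) →
    Cardinal.mk 𝒜 < Cardinal.continuum →
    ∀ F : Set (Fin n → ℝ), IsClosed F → F ⊆ ⋃₀ 𝒜 → volume F = 0 := by
  intro n
  induction n with
  | zero =>
    intro 𝒜 h𝒜 _ F _ hFsub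
    have hempty : ⋃₀ 𝒜 = ∅ := by
      ext x
      simp only [Set.mem_sUnion, Set.mem_empty_iff_false, iff_false, not_exists]
      rintro A ⟨hA, hxA⟩
      obtain ⟨P, hP0, rfl⟩ := h𝒜 A hA
      obtain ⟨r, rfl⟩ := MvPolynomial.C_surjective (Fin 0) P
      have hr : r ≠ 0 := by simpa using hP0
      simp only [Set.mem_setOf_eq, MvPolynomial.eval_C] at hxA
      exact hr hxA
    have : F = ∅ := Set.eq_empty_of_subset_empty (hempty ▸ hFsub)
    simp [this]
  | succ n ih =>
    intro 𝒜 h𝒜 hcard F hF hFsub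
    classical
    choose P hP0 hPA using h𝒜
    set e : (Fin (n + 1) → ℝ) ≃ᵐ ℝ × (Fin n → ℝ) :=
      MeasurableEquiv.piFinSuccAbove (fun _ : Fin (n + 1) => ℝ) 0 with he
    have mp : MeasurePreserving e volume volume :=
      volume_preserving_piFinSuccAbove (fun _ : Fin (n + 1) => ℝ) 0
    set G : Set (ℝ × (Fin n → ℝ)) := e '' F with hG
    have hGm : MeasurableSet G :=
      e.measurableEmbedding.measurableSet_image.2 hF.measurableSet
    have hesymm : ∀ (t : ℝ) (y : Fin n → ℝ), e.symm (t, y) = Fin.cons t y := by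
      intro t y
      rw [he]
      simp [MeasurableEquiv.piFinSuccAbove, Fin.insertNth_zero', Fin.consEquiv]
    have hmem : ∀ t y, (t, y) ∈ G ↔ Fin.cons t y ∈ F := by
      intro t y
      rw [hG, MeasurableEquiv.image_eq_preimage_symm]
      rw [Set.mem_preimage, hesymm]
    have hvol : volume F = volume G := by
      have := mp.measure_preimage hGm.nullMeasurableSet
      rwa [Set.preimage_image_eq F e.injective] at this
    -- bad set of hyperplanes
    set B : Set ℝ := ⋃ a : 𝒜,
      {t : ℝ | Polynomial.eval (MvPolynomial.C t)
        (MvPolynomial.finSuccEquiv ℝ n (P a a.2)) = 0} with hB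
    have hBcard : #B < continuum := by
      apply lt_of_le_of_lt (Cardinal.mk_iUnion_le _)
      apply Cardinal.mul_lt_of_lt Cardinal.aleph0_le_continuum hcard
      apply lt_of_le_of_lt _ Cardinal.aleph0_lt_continuum
      exact ciSup_le' fun a => (slice_poly_bad_finite n _ (hP0 a a.2)).lt_aleph0.le
    -- slices away from B are null
    have hslice : ∀ t ∉ B, volume (Prod.mk t ⁻¹' G) = 0 := by
      intro t ht
      refine ih (Set.range (fun a : 𝒜 => {y : Fin n → ℝ |
          MvPolynomial.eval y (Polynomial.eval (MvPolynomial.C t)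
            (MvPolynomial.finSuccEquiv ℝ n (P a a.2))) = 0})) ?_ ?_ _ ?_ ?_
      · rintro A' ⟨a, rfl⟩
        refine ⟨_, ?_, rfl⟩
        intro h0
        exact ht (Set.mem_iUnion.2 ⟨a, h0⟩)
      · exact lt_of_le_of_lt Cardinal.mk_range_le hcard
      · have : Prod.mk t ⁻¹' G = (fun y => Fin.cons t y) ⁻¹' F := by
          ext y; exact hmem t y
        rw [this]
        refine hF.preimage ?_
        refine continuous_pi fun i => ?_
        refine Fin.cases ?_ (fun j => ?_) i
        · simpa using continuous_const
        · simpa using continuous_apply j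
      · intro y hy
        rw [Set.mem_preimage] at hy
        obtain ⟨A, hA, hxA⟩ := hFsub ((hmem t y).1 hy)
        have hxA' : MvPolynomial.eval (Fin.cons t y) (P A hA) = 0 := by
          have := hPA A hA ▸ hxA
          exact this
        refine ⟨_, ⟨(⟨A, hA⟩ : 𝒜), rfl⟩, ?_⟩
        rw [Set.mem_setOf_eq, ← slice_poly_eval]
        exact hxA'
    have hfmeas : Measurable fun t => volume (Prod.mk t ⁻¹' G) :=
      measurable_measure_prodMk_left hGm
    set N : Set ℝ := {t | volume (Prod.mk t ⁻¹' G) ≠ 0} with hN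
    have hNB : N ⊆ B := fun t ht => by
      by_contra h
      exact ht (hslice t h)
    have hNmeas : MeasurableSet N := hfmeas (MeasurableSet.singleton 0).compl
    have hN0 : volume N = 0 := by
      by_contra h
      have := continuum_le_mk_of_pos hNmeas h
      exact absurd (this.trans (Cardinal.mk_le_mk_of_subset hNB)) (not_le_of_gt hBcard)
    rw [hvol, show (volume : Measure (ℝ × (Fin n → ℝ))) = volume.prod volume from rfl,
      Measure.prod_apply hGm]
    rw [lintegral_eq_zero_iff hfmeas]
    refine Filter.eventuallyEq_iff_exists_mem.2 ⟨Nᶜ, ?_, fun t ht => ?_⟩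
    · rwa [mem_ae_iff, compl_compl]
    · simpa using not_not.1 ht

/-- A union of fewer than continuum many zero sets of nonzero polynomials in `n` real
variables has `n`-dimensional inner Lebesgue measure zero. -/
theorem inner_measure_union_algebraic_zero
    (n : ℕ) (hn : 1 ≤ n) (𝒜 : Set (Set (Fin n → ℝ)))
    (h𝒜 : ∀ A ∈ 𝒜, ∃ P : MvPolynomial (Fin n) ℝ, P ≠ 0 ∧
        A = {x : Fin n → ℝ | MvPolynomial.eval x P = 0})
    (hcard : Cardinal.mk 𝒜 < Cardinal.continuum) :
    (⨆ (F : Set (Fin n → ℝ)) (_ : IsClosed F ∧ F ⊆ ⋃₀ 𝒜), volume F) = 0 := by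
  simp only [ENNReal.iSup_eq_zero]
  intro F hF
  exact key_induction n 𝒜 h𝒜 hcard F hF.1 hF.2
end

section
/- Assuming a well-ordering of ℝ, there exists a subset A of ℝ that is algebraically independent over ℚ and has full outer Lebesgue measure (its complement has inner Lebesgue measure zero); consequently A has Hausdorff dimension 1. -/
open MeasureTheory

section AuxAlgIndep

open Cardinal Set Polynomial
open scoped Classical

private lemma ai_insert {S : Set ℝ} (hS : AlgebraicIndependent ℚ ((↑) : S → ℝ)) {a : ℝ}
    (ha : a ∉ S) (h : Transcendental (Algebra.adjoin ℚ S) a) :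
    AlgebraicIndependent ℚ ((↑) : ↥(insert a S) → ℝ) := by
  classical
  have h2 : AlgebraicIndependent ℚ (fun o : Option S => o.elim a (↑)) :=
    (hS.option_iff_transcendental a).2 (by rwa [Subtype.range_coe])
  convert h2.comp _ (Set.subtypeInsertEquivOption ha).injective
  ext x
  by_cases hx : ↑x = a <;> simp [hx, Set.subtypeInsertEquivOption]

private lemma bad_small (S : Set ℝ) (hS : #S < 𝔠) :
    #{x : ℝ | IsAlgebraic (Algebra.adjoin ℚ S) x} < 𝔠 := by
  classical
  have hinj : Function.Injective (algebraMap (Algebra.adjoin ℚ S) ℝ) := Subtype.val_injective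
  haveI : NoZeroSMulDivisors (Algebra.adjoin ℚ S) ℝ :=
    ⟨fun {c x} h => by
      rw [Algebra.smul_def] at h
      rcases mul_eq_zero.1 h with h | h
      · exact Or.inl (hinj (h.trans (map_zero _).symm))
      · exact Or.inr h⟩
  have h1 : #{x : ℝ | IsAlgebraic (Algebra.adjoin ℚ S) x}
      ≤ #(Σ p : Polynomial (Algebra.adjoin ℚ S), {x : ℝ // x ∈ p.aroots ℝ}) := by
    choose p hp0 hpx using fun x : {x : ℝ | IsAlgebraic (Algebra.adjoin ℚ S) x} => x.2
    refine mk_le_of_injective (f := fun x => ⟨p x, ⟨x.1, ?_⟩⟩) ?_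
    · rw [Polynomial.mem_aroots]
      exact ⟨hp0 x, hpx x⟩
    · intro x y h
      simp only [Sigma.mk.inj_iff] at h
      have := (Subtype.heq_iff_coe_eq (fun z => by rw [h.1])).1 h.2
      exact Subtype.ext this
  have h2 : #(Σ p : Polynomial (Algebra.adjoin ℚ S), {x : ℝ // x ∈ p.aroots ℝ})
      ≤ #(Polynomial (Algebra.adjoin ℚ S)) * ℵ₀ := by
    rw [mk_sigma]
    calc (Cardinal.sum fun p : Polynomial (Algebra.adjoin ℚ S) => #{x : ℝ // x ∈ p.aroots ℝ})
        ≤ Cardinal.sum fun _ : Polynomial (Algebra.adjoin ℚ S) => ℵ₀ :=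
          Cardinal.sum_le_sum _ _ fun p => (Multiset.finite_toSet _).lt_aleph0.le
      _ = _ := by rw [Cardinal.sum_const']
  have h3 : #(Polynomial (Algebra.adjoin ℚ S)) ≤ max #(Algebra.adjoin ℚ S) ℵ₀ :=
    Polynomial.cardinalMk_le_max
  have h4 : #(Algebra.adjoin ℚ S) ≤ #ℚ ⊔ #S ⊔ ℵ₀ := Algebra.cardinalMk_adjoin_le ℚ S
  have h5 : #(Algebra.adjoin ℚ S) < 𝔠 := by
    refine h4.trans_lt ?_
    rw [Cardinal.mkRat]
    exact max_lt (max_lt aleph0_lt_continuum hS) aleph0_lt_continuum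
  exact (h1.trans h2).trans_lt (Cardinal.mul_lt_of_lt aleph0_le_continuum
      (h3.trans_lt (max_lt h5 aleph0_lt_continuum)) aleph0_lt_continuum)

private lemma ai_step {S : Set ℝ} (hAI : AlgebraicIndependent ℚ ((↑) : S → ℝ)) (hS : #S < 𝔠)
    {G : Set ℝ} (hG : 𝔠 ≤ #G) :
    ∃ x ∈ G, AlgebraicIndependent ℚ ((↑) : ↥(insert x S) → ℝ) := by
  have hsub : ¬(G ⊆ {x : ℝ | IsAlgebraic (Algebra.adjoin ℚ S) x} ∪ S) := by
    intro h
    have : #G < 𝔠 := (mk_le_mk_of_subset h).trans_lt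
      ((mk_union_le _ _).trans_lt (Cardinal.add_lt_of_lt aleph0_le_continuum
        (bad_small S hS) hS))
    exact absurd hG (not_le_of_gt this)
  obtain ⟨x, hxG, hx⟩ := not_subset.1 hsub
  exact ⟨x, hxG, ai_insert hAI (fun h => hx (Or.inr h)) (fun h => hx (Or.inl h))⟩

private lemma card_ge_of_closed {F : Set ℝ} (hF : IsClosed F) (h : volume F ≠ 0) :
    𝔠 ≤ #F := by
  have hunc : ¬F.Countable := fun hc => h (hc.measure_zero _)
  obtain ⟨f, hfF, -, hf⟩ := hF.exists_nat_bool_injection_of_not_countable hunc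
  have : #(ℕ → Bool) ≤ #F :=
    mk_le_of_injective (f := fun x => (⟨f x, hfF (mem_range_self x)⟩ : F))
      fun x y hxy => hf (congrArg Subtype.val hxy)
  refine le_trans ?_ this
  rw [mk_arrow]
  simp [Cardinal.two_power_aleph0]

private lemma card_closed_sets :
    #{F : Set ℝ | IsClosed F ∧ volume F ≠ 0} ≤ 𝔠 := by
  have key : ∀ F : {F : Set ℝ | IsClosed F ∧ volume F ≠ 0},
      ∃ u : ℕ → ℝ, closure (Set.range u) = F.1 := by
    rintro ⟨F, hFc, hF0⟩
    have hne : F.Nonempty := by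
      rcases F.eq_empty_or_nonempty with rfl | h
      · simp at hF0
      · exact h
    haveI : Nonempty F := hne.to_subtype
    obtain ⟨u, hu⟩ := TopologicalSpace.exists_dense_seq F
    refine ⟨fun n => (u n : ℝ), le_antisymm ?_ ?_⟩
    · refine hFc.closure_subset_iff.2 ?_
      rintro - ⟨n, rfl⟩; exact (u n).2
    · intro x hx
      have h1 : (⟨x, hx⟩ : F) ∈ closure (Set.range u) := hu ⟨x, hx⟩
      have h2 := image_closure_subset_closure_image (f := (Subtype.val : F → ℝ))
        continuous_subtype_val ⟨⟨x, hx⟩, h1, rfl⟩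
      rwa [← Set.range_comp] at h2
  choose u hu using key
  have hinj : Function.Injective u := by
    intro F G hFG
    exact Subtype.ext (by rw [← hu F, ← hu G, hFG])
  calc #{F : Set ℝ | IsClosed F ∧ volume F ≠ 0} ≤ #(ℕ → ℝ) := mk_le_of_injective hinj
    _ ≤ 𝔠 := by rw [mk_arrow]; simp [Cardinal.mk_real, Cardinal.continuum_power_aleph0]

private abbrev Idx : Type := Cardinal.continuum.ord.ToType

private noncomputable def pick (e : Idx → Set ℝ) : Idx → ℝ :=
  (IsWellFounded.wf (α := Idx) (r := (· < ·))).fix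
    (fun i prev =>
      if h : ∃ x, x ∈ e i ∧ AlgebraicIndependent ℚ
          ((↑) : ↥(insert x {y : ℝ | ∃ j, ∃ hj : j < i, prev j hj = y}) → ℝ)
      then h.choose else 0)

private lemma pick_eq (e : Idx → Set ℝ) (i : Idx) :
    pick e i =
      if h : ∃ x, x ∈ e i ∧ AlgebraicIndependent ℚ
          ((↑) : ↥(insert x {y : ℝ | ∃ j, ∃ hj : j < i, pick e j = y}) → ℝ)
      then h.choose else 0 :=
  WellFounded.fix_eq _ _ _

private lemma pick_set_eq (e : Idx → Set ℝ) (i : Idx) :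
    {y : ℝ | ∃ j, ∃ hj : j < i, pick e j = y} = pick e '' Iio i := by
  ext y; simp [Set.mem_image, eq_comm]

private lemma pick_spec (e : Idx → Set ℝ)
    (he : ∀ i, IsClosed (e i) ∧ volume (e i) ≠ 0) (i : Idx) :
    pick e i ∈ e i ∧ AlgebraicIndependent ℚ ((↑) : ↥(pick e '' Iic i) → ℝ) := by
  refine (IsWellFounded.wf (α := Idx) (r := (· < ·))).induction
    (C := fun i => pick e i ∈ e i ∧
      AlgebraicIndependent ℚ ((↑) : ↥(pick e '' Iic i) → ℝ)) i ?_
  clear i; intro i IH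
  have hIio : AlgebraicIndependent ℚ ((↑) : ↥(pick e '' Iio i) → ℝ) := by
    rcases (Iio i).eq_empty_or_nonempty with h | ⟨j0, hj0⟩
    · rw [h, image_empty]; exact algebraicIndependent_empty
    · have himg : pick e '' Iio i = ⋃ j : Iio i, pick e '' Iic j.1 := by
        ext y; constructor
        · rintro ⟨k, hk, rfl⟩
          exact mem_iUnion.2 ⟨⟨k, hk⟩, ⟨k, self_mem_Iic, rfl⟩⟩
        · intro hy
          obtain ⟨⟨j, hj⟩, k, hk, rfl⟩ := mem_iUnion.1 hy
          exact ⟨k, mem_Iio.2 (lt_of_le_of_lt (mem_Iic.1 hk) (mem_Iio.1 hj)), rfl⟩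
      rw [himg]
      haveI : Nonempty (Iio i) := ⟨⟨j0, hj0⟩⟩
      refine algebraicIndependent_iUnion_of_directed ?_ ?_
      · intro j k
        rcases le_total j.1 k.1 with h | h
        · exact ⟨k, image_mono (Iic_subset_Iic.2 h), subset_rfl⟩
        · exact ⟨j, subset_rfl, image_mono (Iic_subset_Iic.2 h)⟩
      · exact fun j => (IH j.1 j.2).2
  have hcard : #(pick e '' Iio i) < 𝔠 :=
    mk_image_le.trans_lt (mk_Iio_ord_toType i)
  obtain ⟨x, hxe, hxAI⟩ := ai_step hIio hcard (card_ge_of_closed (he i).1 (he i).2)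
  rw [← pick_set_eq e i] at hxAI
  have hex : ∃ x, x ∈ e i ∧ AlgebraicIndependent ℚ
      ((↑) : ↥(insert x {y : ℝ | ∃ j, ∃ hj : j < i, pick e j = y}) → ℝ) := ⟨x, hxe, hxAI⟩
  have hpick : pick e i = hex.choose := by rw [pick_eq, dif_pos hex]
  have hspec := hex.choose_spec
  constructor
  · rw [hpick]; exact hspec.1
  · have h2 : pick e '' Iic i = insert (pick e i) (pick e '' Iio i) := by
      rw [← Set.Iio_insert, image_insert_eq]
    rw [h2, hpick, ← pick_set_eq e i]; exact hspec.2

end AuxAlgIndep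

/-- There exists a subset `A` of `ℝ`, algebraically independent over `ℚ`, whose complement
has inner Lebesgue measure zero (so `A` has full outer measure), and hence `A` has
Hausdorff dimension `1`. -/
theorem exists_algebraically_independent_full_outer :
    ∃ A : Set ℝ, AlgebraicIndependent ℚ (fun a : A => (a : ℝ)) ∧
      (⨆ (F : Set ℝ) (_ : IsClosed F ∧ F ⊆ Aᶜ), volume F) = 0 ∧
      dimH A = 1 := by
  classical
  open Cardinal Set in
  -- index the closed sets of positive measure
  haveI hPne : Nonempty {F : Set ℝ | IsClosed F ∧ volume F ≠ 0} :=
    ⟨⟨Icc 0 1, isClosed_Icc, by simp [Real.volume_Icc]⟩⟩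
  obtain ⟨φ⟩ : Nonempty ({F : Set ℝ | IsClosed F ∧ volume F ≠ 0} ↪ Idx) := by
    rw [← Cardinal.le_def, mk_ord_toType]
    exact card_closed_sets
  let e : Idx → Set ℝ := fun i =>
    if h : ∃ p : {F : Set ℝ | IsClosed F ∧ volume F ≠ 0}, φ p = i then h.choose.1 else Icc 0 1
  have he : ∀ i, IsClosed (e i) ∧ volume (e i) ≠ 0 := by
    intro i
    by_cases h : ∃ p : {F : Set ℝ | IsClosed F ∧ volume F ≠ 0}, φ p = i
    · simp only [e, dif_pos h]; exact h.choose.2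
    · simp only [e, dif_neg h]
      exact ⟨isClosed_Icc, by simp [Real.volume_Icc]⟩
  have hsurj : ∀ p : {F : Set ℝ | IsClosed F ∧ volume F ≠ 0}, e (φ p) = p.1 := by
    intro p
    have h : ∃ q : {F : Set ℝ | IsClosed F ∧ volume F ≠ 0}, φ q = φ p := ⟨p, rfl⟩
    simp only [e, dif_pos h]
    rw [φ.injective h.choose_spec]
  refine ⟨Set.range (pick e), ?_, ?_, ?_⟩
  case _ =>
    -- algebraic independence of the whole range
    haveI : Nonempty Idx := by
      rw [Ordinal.nonempty_toType_iff]
      intro h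
      exact continuum_ne_zero (Cardinal.ord_eq_zero.1 h)
    have hrange : Set.range (pick e) = ⋃ i : Idx, pick e '' Iic i := by
      ext y; constructor
      · rintro ⟨i, rfl⟩; exact mem_iUnion.2 ⟨i, ⟨i, self_mem_Iic, rfl⟩⟩
      · intro hy
        obtain ⟨i, k, _, rfl⟩ := mem_iUnion.1 hy
        exact ⟨k, rfl⟩
    have : AlgebraicIndependent ℚ ((↑) : ↥(Set.range (pick e)) → ℝ) := by
      rw [hrange]
      refine algebraicIndependent_iUnion_of_directed ?_ ?_
      · intro j k
        rcases le_total j k with h | h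
        · exact ⟨k, image_mono (Iic_subset_Iic.2 h), subset_rfl⟩
        · exact ⟨j, subset_rfl, image_mono (Iic_subset_Iic.2 h)⟩
      · exact fun i => (pick_spec e he i).2
    exact this
  case _ =>
    -- every closed subset of the complement is null
    have key : ∀ F : Set ℝ, IsClosed F → F ⊆ (Set.range (pick e))ᶜ → volume F = 0 := by
      intro F hFc hFA
      by_contra h0
      have hmem := (pick_spec e he (φ ⟨F, hFc, h0⟩)).1
      rw [hsurj ⟨F, hFc, h0⟩] at hmem
      exact hFA hmem (mem_range_self _)
    refine le_antisymm ?_ zero_le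
    exact iSup_le fun F => iSup_le fun hF => le_of_eq (key F hF.1 hF.2)
  case _ =>
    -- Hausdorff dimension
    have key : ∀ F : Set ℝ, IsClosed F → F ⊆ (Set.range (pick e))ᶜ → volume F = 0 := by
      intro F hFc hFA
      by_contra h0
      have hmem := (pick_spec e he (φ ⟨F, hFc, h0⟩)).1
      rw [hsurj ⟨F, hFc, h0⟩] at hmem
      exact hFA hmem (mem_range_self _)
    have hA0 : volume (Set.range (pick e)) ≠ 0 := by
      intro h0
      obtain ⟨G, hAG, hGm, hG0⟩ := exists_measurable_superset_of_null h0
      have hIccG : volume (Icc (0:ℝ) 1 \ G) ≠ ⊤ :=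
        ((measure_mono diff_subset).trans_lt (by rw [Real.volume_Icc]; norm_num)).ne
      have h1 : (1 : ENNReal) ≤ volume (Icc (0:ℝ) 1 \ G) := by
        calc (1 : ENNReal) = volume (Icc (0:ℝ) 1) - volume G := by
              rw [hG0, tsub_zero, Real.volume_Icc]; norm_num
          _ ≤ volume (Icc (0:ℝ) 1 \ G) := le_measure_diff
      obtain ⟨K, hKsub, hKcomp, hKlt⟩ :=
        (measurableSet_Icc.diff hGm).exists_isCompact_lt_add (μ := volume) hIccG
          (ε := 1/2) (by norm_num)
      have hK0 : volume K ≠ 0 := by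
        intro hK
        rw [hK, zero_add] at hKlt
        have h2 : (1 : ENNReal) < 1/2 := h1.trans_lt hKlt
        have h3 : ¬((1 : ENNReal) < 1/2) := by
          rw [not_lt]
          exact ENNReal.div_le_of_le_mul (by norm_num)
        exact h3 h2
      refine hK0 (key K hKcomp.isClosed ?_)
      intro x hx hxA
      exact (hKsub hx).2 (hAG hxA)
    have hdim_ge : (1 : ENNReal) ≤ dimH (Set.range (pick e)) := by
      have hne : μH[1] (Set.range (pick e)) ≠ 0 := by
        rw [MeasureTheory.hausdorffMeasure_real]; exact hA0
      simpa using le_dimH_of_hausdorffMeasure_ne_zero (d := 1) hne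
    exact le_antisymm ((dimH_mono (subset_univ _)).trans_eq Real.dimH_univ) hdim_ge
end

section
/- There is no independent subset E of ℝ/ℤ (no non-trivial integer linear relations among its elements) such that the n-fold sumset n·E = E + E + ⋯ + E equals all of ℝ/ℤ for some positive integer n. -/
open Finset

def IsTrivialSol {G : Type*} [AddCommGroup G] {n : ℕ} (m : Fin n → ℤ) (x : Fin n → G) : Prop :=
  ∃ p : Fin n → Fin n, (∀ i j, p i = p j → x i = x j) ∧
    ∀ k, ∑ j ∈ Finset.univ.filter (fun j => p j = k), m j • x j = 0

def IndependentSet {G : Type*} [AddCommGroup G] (K : Set G) : Prop :=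
  ∀ (n : ℕ) (m : Fin n → ℤ) (x : Fin n → G),
    (∀ i, x i ∈ K) → ∑ i, m i • x i = 0 → IsTrivialSol m x

lemma aux_not_finorder : ¬ IsOfFinAddOrder ((Real.sqrt 2 : ℝ) : UnitAddCircle) := by
  intro h
  obtain ⟨k, hk, hk0⟩ := isOfFinAddOrder_iff_nsmul_eq_zero.mp h
  rw [← AddCircle.coe_nsmul, AddCircle.coe_eq_zero_iff] at hk0
  obtain ⟨m, hm⟩ := hk0
  have h2 : Real.sqrt 2 = (m : ℝ) / (k : ℝ) := by
    rw [eq_div_iff (by positivity)]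
    simp only [zsmul_eq_mul, mul_one, nsmul_eq_mul] at hm
    rw [hm]; ring
  exact irrational_sqrt_two ⟨(m : ℚ)/(k:ℚ), by push_cast; rw [h2]⟩

lemma aux_sum_finorder {G : Type*} [AddCommGroup G] {ι : Type*} (s : Finset ι) (f : ι → G)
    (h : ∀ i ∈ s, IsOfFinAddOrder (f i)) : IsOfFinAddOrder (∑ i ∈ s, f i) :=
  Finset.sum_induction f IsOfFinAddOrder (fun _ _ => IsOfFinAddOrder.add) (IsOfFinAddOrder.zero) h

lemma aux_inford_zsmul {G : Type*} [AddCommGroup G] {e : G} (he : ¬ IsOfFinAddOrder e)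
    {c : ℤ} (hc : c • e = 0) : c = 0 := by
  by_contra h
  apply he
  refine isOfFinAddOrder_iff_nsmul_eq_zero.mpr ⟨c.natAbs, by omega, ?_⟩
  rcases Int.natAbs_eq c with h' | h'
  · rw [← natCast_zsmul, ← h', hc]
  · rw [← natCast_zsmul, ← neg_neg ((c.natAbs : ℤ)), ← h', neg_zsmul, hc, neg_zero]

/-- No independent subset `E` of `ℝ/ℤ` satisfies `n·E = ℝ/ℤ` for a positive integer `n`. -/
theorem no_independent_with_full_nfold_sumset :
    ¬ ∃ E : Set UnitAddCircle, IndependentSet E ∧ ∃ n : ℕ, 0 < n ∧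
      ∀ x : UnitAddCircle, ∃ f : Fin n → UnitAddCircle,
        (∀ i, f i ∈ E) ∧ ∑ i, f i = x := by
  rintro ⟨E, hE, n, hn, hcov⟩
  -- find an element of E of infinite order
  obtain ⟨g, hgE, hgs⟩ := hcov ((Real.sqrt 2 : ℝ) : UnitAddCircle)
  have hex : ∃ i, ¬ IsOfFinAddOrder (g i) := by
    by_contra h
    push_neg at h
    exact aux_not_finorder (hgs ▸ aux_sum_finorder univ g (fun i _ => h i))
  obtain ⟨i0, he⟩ := hex
  set e : UnitAddCircle := g i0 with he_def
  have heE : e ∈ E := hgE i0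
  -- represent (n+1) • e as a sum of n elements of E
  obtain ⟨f, hfE, hfs⟩ := hcov ((n + 1) • e)
  -- build the relation
  set x : Fin (n + 1 + n) → UnitAddCircle := fun i =>
    if h : (i : ℕ) < n + 1 then e else f ⟨(i : ℕ) - (n + 1), by have := i.isLt; omega⟩ with hx
  set m : Fin (n + 1 + n) → ℤ := fun i => if (i : ℕ) < n + 1 then 1 else -1 with hm
  have hxmem : ∀ i, x i ∈ E := by
    intro i
    by_cases h : (i : ℕ) < n + 1
    · simp only [hx, dif_pos h]; exact heE
    · simp only [hx, dif_neg h]; exact hfE _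
  have hsum : ∑ i, m i • x i = 0 := by
    rw [Fin.sum_univ_add]
    have h1 : ∀ i : Fin (n + 1), m (Fin.castAdd n i) • x (Fin.castAdd n i) = e := by
      intro i
      have hlt : ((Fin.castAdd n i : Fin (n + 1 + n)) : ℕ) < n + 1 := by
        have := i.isLt
        simp [Fin.is_lt]; omega
      simp only [hm, hx, if_pos hlt, dif_pos hlt, one_smul]
    have h2 : ∀ j : Fin n, m (Fin.natAdd (n + 1) j) • x (Fin.natAdd (n + 1) j) = -(f j) := by
      intro j
      have hlt : ¬ ((Fin.natAdd (n + 1) j : Fin (n + 1 + n)) : ℕ) < n + 1 := by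
        simp [Fin.natAdd]; omega
      simp only [hm, hx, if_neg hlt, dif_neg hlt, neg_one_zsmul]
      congr 1
      apply congrArg
      ext
      simp [Fin.natAdd]
    rw [Finset.sum_congr rfl (fun i _ => h1 i), Finset.sum_congr rfl (fun j _ => h2 j)]
    rw [Finset.sum_const, Finset.sum_neg_distrib, hfs]
    simp
  obtain ⟨p, hp1, hp2⟩ := hE (n + 1 + n) m x hxmem hsum
  -- counting argument
  set P : Finset (Fin (n + 1 + n)) := univ.filter (fun i => (i : ℕ) < n + 1) with hP
  set A : Finset (Fin (n + 1 + n)) := P.image p with hA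
  set F : Finset (Fin (n + 1 + n)) := univ.filter (fun j => p j ∈ A) with hF
  have key1 : ∀ k ∈ A, ∑ j ∈ univ.filter (fun j => p j = k), m j = 0 := by
    intro k hk
    obtain ⟨i, hiP, hik⟩ := Finset.mem_image.mp hk
    have hilt : (i : ℕ) < n + 1 := (Finset.mem_filter.mp hiP).2
    have hie : x i = e := by simp only [hx, dif_pos hilt]
    have h0 := hp2 k
    have hcongr : ∀ j ∈ univ.filter (fun j => p j = k), m j • x j = m j • e := by
      intro j hj
      rw [hp1 j i (by rw [(Finset.mem_filter.mp hj).2, hik]), hie]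
    rw [Finset.sum_congr rfl hcongr, ← Finset.sum_smul] at h0
    exact aux_inford_zsmul he h0
  have key2 : ∑ j ∈ F, m j = 0 := by
    rw [← Finset.sum_fiberwise_of_maps_to (g := p) (t := A)
      (fun j hj => (Finset.mem_filter.mp hj).2) m]
    apply Finset.sum_eq_zero
    intro k hk
    have heq : F.filter (fun j => p j = k) = univ.filter (fun j => p j = k) := by
      ext j
      simp only [hF, Finset.mem_filter, Finset.mem_univ, true_and]
      constructor
      · rintro ⟨_, h⟩; exact h
      · intro h; exact ⟨h ▸ hk, h⟩
    rw [heq]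
    exact key1 k hk
  -- but the sum over F is positive
  have hPF : P ⊆ F := by
    intro i hi
    simp only [hF, Finset.mem_filter, Finset.mem_univ, true_and]
    exact Finset.mem_image_of_mem p hi
  have hsplit : ∑ j ∈ F, m j = ∑ j ∈ P, m j + ∑ j ∈ F \ P, m j := by
    rw [← Finset.sum_union Finset.disjoint_sdiff, Finset.union_sdiff_of_subset hPF]
  have hPsum : ∑ j ∈ P, m j = (P.card : ℤ) := by
    rw [Finset.sum_congr rfl (fun j hj => if_pos (Finset.mem_filter.mp hj).2)]
    rw [Finset.sum_const, nsmul_eq_mul, mul_one]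
  have hQsum : ∑ j ∈ F \ P, m j = -((F \ P).card : ℤ) := by
    have hval : ∀ j ∈ F \ P, m j = -1 := by
      intro j hj
      have hnot : j ∉ P := (Finset.mem_sdiff.mp hj).2
      have hnlt : ¬ (j : ℕ) < n + 1 := by
        intro hlt; exact hnot (Finset.mem_filter.mpr ⟨Finset.mem_univ _, hlt⟩)
      exact if_neg hnlt
    rw [Finset.sum_congr rfl hval]
    simp
  have hPcard : P.card = n + 1 := by
    have hP' : P = Finset.Iio (⟨n + 1, by omega⟩ : Fin (n + 1 + n)) := by
      ext i
      simp [hP, Finset.mem_Iio, Fin.lt_def]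
    rw [hP', Fin.card_Iio]
  have hQcard : (F \ P).card ≤ n := by
    have hsub : F \ P ⊆ univ \ P := Finset.sdiff_subset_sdiff (Finset.subset_univ F) le_rfl
    have := Finset.card_le_card hsub
    rw [Finset.card_univ_diff] at this
    simp only [Finset.card_univ, Fintype.card_fin, hPcard] at this
    omega
  rw [hsplit, hPsum, hQsum, hPcard] at key2
  omega
end
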